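/- Let A be a real m×n matrix, x, p ∈ ℝⁿ with p ≠ 0 and ⟪x - p, p⟫ = 0, and set b = A·x, u = p/‖p‖, d = (A·p)/‖p‖², and Ā = A·(I - u·uᵀ). Assume Ā·Āᵀ is invertible and define v = (Ā·Āᵀ)⁻¹·(b - ⟪x, p⟫·d) and q = p + Āᵀ·v. Then ‖q‖² - ‖p‖² = ⟪b - ⟪x, p⟫·d, (Ā·Āᵀ)⁻¹·(b - ⟪x, p⟫·d)⟫. -/

import Mathlib

open scoped RealInnerProductSpace
open Matrix

/-- the norm-gain identity
`‖q‖² - ‖p‖² = ⟪b - ⟪x,p⟫ d, (Ā Āᵀ)⁻¹ (b - ⟪x,p⟫ d)⟫` for the vector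
`q = p + Āᵀ v` built via the rank-one-modified matrix `Ā = A (I - u uᵀ)`. -/
theorem ap_rank_one_step_norm_gain {m n : ℕ}
    (A : Matrix (Fin m) (Fin n) ℝ)
    (x p : EuclideanSpace ℝ (Fin n)) (hp : p ≠ 0)
    (horth : ⟪x - p, p⟫ = 0)
    (b : EuclideanSpace ℝ (Fin m)) (hb : b = A.mulVec x)
    (u : EuclideanSpace ℝ (Fin n)) (hu : u = (1 / ‖p‖) • p)
    (d : EuclideanSpace ℝ (Fin m)) (hd : d = (1 / ‖p‖ ^ 2) • (WithLp.toLp 2 (A.mulVec p) : EuclideanSpace ℝ (Fin m)))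
    (Abar : Matrix (Fin m) (Fin n) ℝ) (hAbar : Abar = A * (1 - vecMulVec u u))
    (hinv : IsUnit (Abar * Abarᵀ))
    (v : EuclideanSpace ℝ (Fin m)) (hv : v = (Abar * Abarᵀ)⁻¹.mulVec (b - ⟪x, p⟫ • d))
    (Atv : EuclideanSpace ℝ (Fin n)) (hAtv : Atv = Abarᵀ.mulVec v)
    (q : EuclideanSpace ℝ (Fin n)) (hq : q = p + Atv) :
    ‖q‖ ^ 2 - ‖p‖ ^ 2
      = ⟪b - ⟪x, p⟫ • d,
          (WithLp.toLp 2 ((Abar * Abarᵀ)⁻¹.mulVec (b - ⟪x, p⟫ • d)) : EuclideanSpace ℝ (Fin m))⟫ := by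
  have hipn : ∀ (y z : EuclideanSpace ℝ (Fin n)), ⟪y, z⟫ = (y : Fin n → ℝ) ⬝ᵥ (z : Fin n → ℝ) := by
    intro y z; simp [PiLp.inner_apply, dotProduct, mul_comm]
  have hipm : ∀ (y z : EuclideanSpace ℝ (Fin m)), ⟪y, z⟫ = (y : Fin m → ℝ) ⬝ᵥ (z : Fin m → ℝ) := by
    intro y z; simp [PiLp.inner_apply, dotProduct, mul_comm]
  have hpnorm : (p : Fin n → ℝ) ⬝ᵥ (p : Fin n → ℝ) = ‖p‖ ^ 2 := by
    rw [← hipn, real_inner_self_eq_norm_sq]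
  have hpne : ‖p‖ ≠ 0 := norm_ne_zero_iff.mpr hp
  -- `(1 - u uᵀ) p = 0`
  have h1 : (1 - vecMulVec u u).mulVec (p : Fin n → ℝ) = 0 := by
    have hup : (u : Fin n → ℝ) ⬝ᵥ (p : Fin n → ℝ) = ‖p‖ := by
      subst hu
      have : ((1 / ‖p‖ : ℝ) • p : EuclideanSpace ℝ (Fin n)) ⬝ᵥ (p : Fin n → ℝ)
          = (1 / ‖p‖) * ((p : Fin n → ℝ) ⬝ᵥ (p : Fin n → ℝ)) := by
        simp [dotProduct, Finset.mul_sum, mul_assoc]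
      rw [this, hpnorm]
      field_simp
    have huu : (vecMulVec u u).mulVec (p : Fin n → ℝ) = (p : Fin n → ℝ) := by
      funext i
      have h2 : ((vecMulVec u u).mulVec (p : Fin n → ℝ)) i
          = u i * ((u : Fin n → ℝ) ⬝ᵥ (p : Fin n → ℝ)) := by
        simp [mulVec, vecMulVec_apply, dotProduct, Finset.mul_sum, mul_assoc]
      rw [h2, hup, hu]
      show (1 / ‖p‖) * p i * ‖p‖ = p i
      field_simp
    rw [sub_mulVec, one_mulVec, huu, sub_self]
  have hAbarp : Abar.mulVec (p : Fin n → ℝ) = 0 := by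
    rw [hAbar, ← mulVec_mulVec, h1, mulVec_zero]
  -- the residual vector
  set w : EuclideanSpace ℝ (Fin m) := b - ⟪x, p⟫ • d with hw
  have hdet : IsUnit (Abar * Abarᵀ).det := (isUnit_iff_isUnit_det _).mp hinv
  have hMMinv : (Abar * Abarᵀ) * (Abar * Abarᵀ)⁻¹ = 1 := mul_nonsing_inv _ hdet
  have hkey : (Abar * Abarᵀ).mulVec (v : Fin m → ℝ) = (w : Fin m → ℝ) := by
    rw [hv, mulVec_mulVec, hMMinv, one_mulVec]; rfl
  -- orthogonality ⟪p, Atv⟫ = 0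
  have horthpq : ⟪p, Atv⟫ = 0 := by
    rw [hipn, hAtv, mulVec_transpose, dotProduct_comm, ← dotProduct_mulVec,
      hAbarp, dotProduct_zero]
  -- ‖Atv‖² = ⟪w, v⟫
  have hAtv2 : ‖Atv‖ ^ 2 = (w : Fin m → ℝ) ⬝ᵥ (v : Fin m → ℝ) := by
    rw [← real_inner_self_eq_norm_sq, hipn, hAtv, mulVec_transpose, ← dotProduct_mulVec,
      mulVec_vecMul, hkey, dotProduct_comm]
  have hrhs : ⟪w, (WithLp.toLp 2 ((Abar * Abarᵀ)⁻¹.mulVec w) : EuclideanSpace ℝ (Fin m))⟫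
      = (w : Fin m → ℝ) ⬝ᵥ (v : Fin m → ℝ) := by
    rw [hipm, WithLp.ofLp_toLp]; exact congrArg _ hv.symm
  calc ‖q‖ ^ 2 - ‖p‖ ^ 2
      = (‖p‖ ^ 2 + 2 * ⟪p, Atv⟫ + ‖Atv‖ ^ 2) - ‖p‖ ^ 2 := by
        rw [hq, norm_add_sq_real]
    _ = (w : Fin m → ℝ) ⬝ᵥ (v : Fin m → ℝ) := by rw [horthpq, hAtv2]; ring
    _ = _ := hrhs.symm
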